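/- arXiv:1503.05165 — 2 statements merged into one kernel-verified Lean document; each statement's English description precedes it below -/
import Mathlib

section
/- Let q be a prime with q ≡ 3 (mod 4). Then the number of projective points of the elliptic curve y² = x³ - x over F_q is exactly q + 1. -/
section helper

variable {F : Type*} [Field F]

/-- The nonsingular points of an affine Weierstrass curve are the affine points together
with the point at infinity. -/
def ptEquiv (W : WeierstrassCurve.Affine F) :
    WeierstrassCurve.Affine.Point W ≃
      Option {p : F × F // WeierstrassCurve.Affine.Nonsingular W p.1 p.2} where
  toFun P := match P with
    | .zero => none
    | @WeierstrassCurve.Affine.Point.some _ _ _ x y h => some ⟨(x, y), h⟩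
  invFun o := match o with
    | none => .zero
    | some ⟨(_, _), h⟩ => .some _ _ h
  left_inv P := by cases P <;> rfl
  right_inv o := by rcases o with _ | ⟨⟨x, y⟩, h⟩ <;> rfl

end helper

theorem nonsing_iff (q : ℕ) [Fact q.Prime] (hq : q % 4 = 3) :
    ∀ x y : ZMod q, WeierstrassCurve.Affine.Nonsingular
      (⟨0, 0, 0, -1, 0⟩ : WeierstrassCurve.Affine (ZMod q)) x y ↔
      y ^ 2 = x ^ 3 - x := by
  intro x y
  set W : WeierstrassCurve.Affine (ZMod q) := ⟨0, 0, 0, -1, 0⟩ with hW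
  have h2 : (2 : ZMod q) ≠ 0 := by
    intro h
    have h' : ((2 : ℕ) : ZMod q) = 0 := by push_cast; exact h
    rw [ZMod.natCast_eq_zero_iff] at h'
    have := Nat.le_of_dvd two_pos h'
    omega
  have hΔ : WeierstrassCurve.Δ W ≠ 0 := by
    have h64 : WeierstrassCurve.Δ W = 2 ^ 6 := by
      simp [hW, WeierstrassCurve.Δ, WeierstrassCurve.b₂, WeierstrassCurve.b₄,
        WeierstrassCurve.b₆, WeierstrassCurve.b₈]
      norm_num
    rw [h64]
    exact pow_ne_zero _ h2
  constructor
  · intro h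
    have := ((WeierstrassCurve.Affine.nonsingular_iff (W := W) x y).mp h).1
    rw [WeierstrassCurve.Affine.equation_iff] at this
    simp only [hW] at this
    linear_combination this
  · intro h
    refine (WeierstrassCurve.Affine.equation_iff_nonsingular_of_Δ_ne_zero (W := W) hΔ).mp ?_
    rw [WeierstrassCurve.Affine.equation_iff]
    simp only [hW]
    linear_combination h

theorem sum_char_zero (q : ℕ) [Fact q.Prime] (hq : q % 4 = 3) :
    ∑ x : ZMod q, quadraticChar (ZMod q) (x ^ 3 - x) = 0 := by
  have hq2 : q ≠ 2 := by omega
  have hchar : ringChar (ZMod q) ≠ 2 := by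
    rw [ZMod.ringChar_zmod_n]; exact hq2
  have hneg : quadraticChar (ZMod q) (-1) = -1 := by
    rw [quadraticChar_neg_one hchar, ZMod.card]
    exact ZMod.χ₄_nat_three_mod_four hq
  have key : ∀ x : ZMod q, quadraticChar (ZMod q) ((-x) ^ 3 - (-x))
      = -quadraticChar (ZMod q) (x ^ 3 - x) := by
    intro x
    have : (-x) ^ 3 - (-x) = (-1) * (x ^ 3 - x) := by ring
    rw [this, map_mul, hneg, neg_one_mul]
  have h := Fintype.sum_equiv (Equiv.neg (ZMod q))
    (fun x => quadraticChar (ZMod q) ((-x) ^ 3 - (-x)))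
    (fun x => quadraticChar (ZMod q) (x ^ 3 - x)) (fun x => rfl)
  simp only [key] at h
  rw [Finset.sum_neg_distrib] at h
  linarith [h]

theorem card_affine (q : ℕ) [Fact q.Prime] (hq : q % 4 = 3) :
    Nat.card {p : ZMod q × ZMod q // p.2 ^ 2 = p.1 ^ 3 - p.1} = q := by
  have hchar : ringChar (ZMod q) ≠ 2 := by
    rw [ZMod.ringChar_zmod_n]; omega
  rw [Nat.card_eq_fintype_card]
  have e := Equiv.subtypeProdEquivSigmaSubtype (fun (x y : ZMod q) => y ^ 2 = x ^ 3 - x)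
  rw [Fintype.card_congr e, Fintype.card_sigma]
  have hfib : ∀ x : ZMod q, (Fintype.card {y : ZMod q // y ^ 2 = x ^ 3 - x} : ℤ)
      = quadraticChar (ZMod q) (x ^ 3 - x) + 1 := by
    intro x
    rw [← quadraticChar_card_sqrts hchar (x ^ 3 - x)]
    congr 1
    rw [Set.toFinset_card]
    exact Fintype.card_congr' rfl
  have : ((∑ x : ZMod q, Fintype.card {y : ZMod q // y ^ 2 = x ^ 3 - x} : ℕ) : ℤ) = q := by
    push_cast
    rw [Finset.sum_congr rfl (fun x _ => hfib x), Finset.sum_add_distrib,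
      sum_char_zero q hq]
    simp [ZMod.card]
  exact_mod_cast this

/-- For a prime `q ≡ 3 mod 4`, the elliptic curve `y² = x³ - x` over `F_q` has exactly
`q + 1` projective points (the nonsingular affine points together with the point at
infinity). -/
theorem curve_y2_eq_x3_sub_x_card (q : ℕ) [Fact q.Prime] (hq : q % 4 = 3) :
    Nat.card (WeierstrassCurve.Affine.Point
        (⟨0, 0, 0, -1, 0⟩ : WeierstrassCurve.Affine (ZMod q))) = q + 1 := by
  classical
  have h2 : Nat.card {p : ZMod q × ZMod q // WeierstrassCurve.Affine.Nonsingular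
      (⟨0, 0, 0, -1, 0⟩ : WeierstrassCurve.Affine (ZMod q)) p.1 p.2}
      = Nat.card {p : ZMod q × ZMod q // p.2 ^ 2 = p.1 ^ 3 - p.1} :=
    Nat.card_congr (Equiv.subtypeEquivRight (fun p => nonsing_iff q hq p.1 p.2))
  rw [Nat.card_congr (ptEquiv _), Finite.card_option, h2, card_affine q hq]
end

section
/- Let p be a prime, g ∈ (Z/pZ), and α ∈ F_p a non-square. Suppose γ = [[a,b],[c,d]] ∈ SL_2(Z) reduces modulo p to a matrix of the form [[x, αy],[y, x]] (an element of the non-split Cartan), and suppose that right multiplication by γ maps the lattice L = Z·(1, g) + Z·(0, p) ⊂ Z² into itself (here row vectors act by v ↦ v·γ). Then γ ≡ Id or -Id modulo p. -/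
/-- Lattice computation: if `γ ∈ SL₂(ℤ)` reduces mod `p` to an element `[[x, αy],[y, x]]`
of a non-split Cartan subgroup (`α` a non-square), and right multiplication by `γ` maps the
lattice `L = ℤ·(1, g) + ℤ·(0, p)` into itself, then `γ ≡ ±Id mod p`. -/
theorem nonsplit_cartan_lattice (p : ℕ) [Fact p.Prime] (g : ℤ)
    (α : ZMod p) (hα : ¬ IsSquare α)
    (γ : Matrix (Fin 2) (Fin 2) ℤ) (hdet : γ.det = 1)
    (x y : ZMod p) (hred : γ.map (Int.cast : ℤ → ZMod p) = !![x, α * y; y, x])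
    (hL : ∀ m n : ℤ, ∃ m' n' : ℤ,
      Matrix.vecMul (m • ![(1 : ℤ), g] + n • ![(0 : ℤ), (p : ℤ)]) γ =
        m' • ![(1 : ℤ), g] + n' • ![(0 : ℤ), (p : ℤ)]) :
    γ.map (Int.cast : ℤ → ZMod p) = (1 : Matrix (Fin 2) (Fin 2) (ZMod p)) ∨
      γ.map (Int.cast : ℤ → ZMod p) = -1 := by
  obtain ⟨m', n', h1⟩ := hL 1 0
  have h0 := congrFun h1 0
  have h2 := congrFun h1 1
  simp [Matrix.vecMul, dotProduct, Fin.sum_univ_two, Matrix.vecHead,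
    Matrix.vecTail] at h0 h2
  have e00 : ((γ 0 0 : ℤ) : ZMod p) = x := by simpa using congrFun (congrFun hred 0) 0
  have e01 : ((γ 0 1 : ℤ) : ZMod p) = α * y := by simpa using congrFun (congrFun hred 0) 1
  have e10 : ((γ 1 0 : ℤ) : ZMod p) = y := by simpa using congrFun (congrFun hred 1) 0
  have e11 : ((γ 1 1 : ℤ) : ZMod p) = x := by simpa using congrFun (congrFun hred 1) 1
  have c0 := congrArg (Int.cast : ℤ → ZMod p) h0
  have c2 := congrArg (Int.cast : ℤ → ZMod p) h2
  push_cast at c0 c2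
  rw [e00, e10] at c0
  rw [e01, e11, ZMod.natCast_self] at c2
  have key : (α - (g : ZMod p) ^ 2) * y = 0 := by
    have : α * y + (g : ZMod p) * x = ((m' : ZMod p)) * g := by
      rw [c2]; ring
    rw [← c0] at this
    linear_combination this
  have hy : y = 0 := by
    rcases mul_eq_zero.mp key with h | h
    · exact absurd ⟨(g : ZMod p), by linear_combination h⟩ hα
    · exact h
  have hx : x * x = 1 := by
    have : (γ.map (Int.cast : ℤ → ZMod p)).det = 1 := by
      rw [show γ.map (Int.cast : ℤ → ZMod p) = (Int.castRingHom (ZMod p)).mapMatrix γ from rfl,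
        ← RingHom.map_det, hdet]
      simp
    rw [hred, Matrix.det_fin_two_of, hy] at this
    linear_combination this
  rcases mul_self_eq_one_iff.mp hx with h | h
  · left
    rw [hred, hy, h]
    ext i j
    fin_cases i <;> fin_cases j <;> simp
  · right
    rw [hred, hy, h]
    ext i j
    fin_cases i <;> fin_cases j <;> simp
end
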